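/- arXiv:1805.01562 — 2 statements merged into one kernel-verified Lean document; each statement's English description precedes it below -/
import Mathlib

section
/- Let n ≥ sk+1. The number of s-separated k-subsets of a circle with n elements that contain the fixed element 1 is C(n - sk - 1, k - 1). -/
/-- Circular distance between `a` and `b` on a circle of `n` elements labeled `1,...,n`. -/
def circDist (n a b : ℕ) : ℕ := min (max a b - min a b) (n - (max a b - min a b))

/-- A subset of the circle `{1,...,n}` is `s`-separated if any two distinct elements
have circular distance at least `s+1`. -/
def IsSepCircle (n s : ℕ) (S : Finset ℕ) : Prop :=
  ∀ a ∈ S, ∀ b ∈ S, a ≠ b → s + 1 ≤ circDist n a b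

open Finset


def rnk (S : Finset ℕ) (a : ℕ) : ℕ := (S.filter (· < a)).card

lemma rnk_le_card (S : Finset ℕ) (a : ℕ) : rnk S a ≤ S.card :=
  card_le_card (filter_subset _ _)

lemma rnk_mono (S : Finset ℕ) {a b : ℕ} (hab : a ≤ b) : rnk S a ≤ rnk S b := by
  apply card_le_card
  intro x hx
  rw [mem_filter] at *
  exact ⟨hx.1, lt_of_lt_of_le hx.2 hab⟩

lemma rnk_lt_rnk {S : Finset ℕ} {a b : ℕ} (ha : a ∈ S) (hab : a < b) :
    rnk S a < rnk S b := by
  apply card_lt_card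
  rw [ssubset_iff_of_subset (by
    intro x hx; rw [mem_filter] at *; exact ⟨hx.1, hx.2.trans hab⟩)]
  exact ⟨a, mem_filter.mpr ⟨ha, hab⟩, by simp [mem_filter]⟩

lemma rnk_one {S : Finset ℕ} {n : ℕ} (hsub : S ⊆ Finset.Icc 1 n) : rnk S 1 = 0 := by
  rw [rnk, card_eq_zero, filter_eq_empty_iff]
  intro x hx
  have := (mem_Icc.mp (hsub hx)).1
  omega

lemma rnk_chain {d : ℕ} {S : Finset ℕ}
    (hS : ∀ a ∈ S, ∀ b ∈ S, a < b → a + d ≤ b) :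
    ∀ b ∈ S, ∀ a ∈ S, a ≤ b → a + d * (rnk S b - rnk S a) ≤ b := by
  intro b
  induction b using Nat.strong_induction_on with
  | _ b IH =>
    intro hb a ha hab
    rcases eq_or_lt_of_le hab with rfl | h
    · simp
    · have hne : (S.filter (· < b)).Nonempty := ⟨a, mem_filter.mpr ⟨ha, h⟩⟩
      set c := (S.filter (· < b)).max' hne with hc
      have hcmem := (S.filter (· < b)).max'_mem hne
      rw [mem_filter] at hcmem
      obtain ⟨hcS, hcb⟩ := hcmem
      have hac : a ≤ c := le_max' (S.filter (· < b)) a (mem_filter.mpr ⟨ha, h⟩)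
      have hrb : rnk S b = rnk S c + 1 := by
        have hins : S.filter (· < b) = insert c (S.filter (· < c)) := by
          ext x
          simp only [mem_filter, mem_insert]
          constructor
          · rintro ⟨hxS, hxb⟩
            rcases eq_or_lt_of_le (le_max' (S.filter (· < b)) x (mem_filter.mpr ⟨hxS, hxb⟩)) with h' | h'
            · left; exact h'
            · right; exact ⟨hxS, h'⟩
          · rintro (rfl | ⟨hxS, hxc⟩)
            · exact ⟨hcS, hcb⟩
            · exact ⟨hxS, hxc.trans hcb⟩
        rw [rnk, rnk, hins, card_insert_of_notMem (by simp [mem_filter])]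
      have hIH := IH c hcb hcS a ha hac
      have hra : rnk S a ≤ rnk S c := rnk_mono S hac
      have hcd : c + d ≤ b := hS c hcS b hb hcb
      have hmul : d * (rnk S b - rnk S a) = d * (rnk S c - rnk S a) + d := by
        have e1 : rnk S b - rnk S a = (rnk S c - rnk S a) + 1 := by omega
        rw [e1, Nat.mul_succ]
      omega

lemma rnk_image {S : Finset ℕ} {φ : ℕ → ℕ}
    (hφ : ∀ x ∈ S, ∀ y ∈ S, x < y → φ x < φ y) {a : ℕ} (ha : a ∈ S) :
    rnk (S.image φ) (φ a) = rnk S a := by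
  have key : (S.image φ).filter (· < φ a) = (S.filter (· < a)).image φ := by
    ext y
    simp only [mem_filter, mem_image]
    constructor
    · rintro ⟨⟨x, hxS, rfl⟩, hlt⟩
      refine ⟨x, ⟨hxS, ?_⟩, rfl⟩
      rcases lt_trichotomy x a with h | rfl | h
      · exact h
      · omega
      · exact absurd (hφ a ha x hxS h) (by omega)
    · rintro ⟨x, ⟨hxS, hxa⟩, rfl⟩
      exact ⟨⟨x, hxS, rfl⟩, hφ x hxS a ha hxa⟩
  rw [rnk, key, rnk, card_image_of_injOn]
  intro x hx y hy hxy
  rw [mem_coe, mem_filter] at hx hy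
  by_contra hne
  rcases lt_or_gt_of_ne hne with h | h
  · exact absurd hxy (hφ x hx.1 y hy.1 h).ne
  · exact absurd hxy.symm (hφ y hy.1 x hx.1 h).ne

lemma gap_of_sep {n s : ℕ} {S : Finset ℕ} (hsub : S ⊆ Finset.Icc 1 n)
    (hsep : IsSepCircle n s S) :
    ∀ a ∈ S, ∀ b ∈ S, a < b → a + (s + 1) ≤ b := by
  intro a ha b hb hab
  have h := hsep a ha b hb (by omega)
  have hb' : b ≤ n := (mem_Icc.mp (hsub hb)).2
  unfold circDist at h
  rw [max_eq_right hab.le, min_eq_left hab.le] at h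
  omega

/-- upper bound: every element has room above it. -/
lemma top_bound {n s k : ℕ} {S : Finset ℕ} (hs : 1 ≤ s) (hk : 1 ≤ k)
    (hn : s * k + 1 ≤ n) (hsub : S ⊆ Finset.Icc 1 n) (hcard : S.card = k)
    (hsep : IsSepCircle n s S) (h1 : (1 : ℕ) ∈ S) :
    ∀ a ∈ S, a + s + (s + 1) * (k - 1 - rnk S a) ≤ n := by
  intro a ha
  have hne : S.Nonempty := ⟨1, h1⟩
  set M := S.max' hne with hM
  have hMS : M ∈ S := S.max'_mem hne
  have haM : a ≤ M := le_max' _ a ha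
  have hrM : rnk S M = k - 1 := by
    have : S.filter (· < M) = S.erase M := by
      ext x
      simp only [mem_filter, mem_erase]
      constructor
      · rintro ⟨hxS, hlt⟩; exact ⟨by omega, hxS⟩
      · rintro ⟨hne', hxS⟩
        exact ⟨hxS, lt_of_le_of_ne (le_max' _ x hxS) hne'⟩
    rw [rnk, this, card_erase_of_mem hMS, hcard]
  have hchain := rnk_chain (gap_of_sep hsub hsep) M hMS a ha haM
  rw [hrM] at hchain
  have hMn : M + s ≤ n := by
    by_cases hM1 : M = 1
    · have hka : s * 1 ≤ s * k := Nat.mul_le_mul_left s hk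
      omega
    · have h := hsep M hMS 1 h1 hM1
      have hM1' : 1 ≤ M := (mem_Icc.mp (hsub hMS)).1
      have hMn' : M ≤ n := (mem_Icc.mp (hsub hMS)).2
      unfold circDist at h
      rw [max_eq_left hM1', min_eq_right hM1'] at h
      omega
  omega

/-- lower bound via chain from 1. -/
lemma bot_bound {n s : ℕ} {S : Finset ℕ} (hsub : S ⊆ Finset.Icc 1 n)
    (hsep : IsSepCircle n s S) (h1 : (1 : ℕ) ∈ S) :
    ∀ a ∈ S, 1 + (s + 1) * rnk S a ≤ a := by
  intro a ha
  have h1a : 1 ≤ a := (mem_Icc.mp (hsub ha)).1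
  have := rnk_chain (gap_of_sep hsub hsep) a ha 1 h1 h1a
  rw [rnk_one hsub] at this
  simpa using this

lemma rnk_pred_card {S : Finset ℕ} {a : ℕ} (ha : a ∈ S) : rnk S a ≤ S.card - 1 := by
  have hsub : S.filter (· < a) ⊆ S.erase a := by
    intro x hx
    rw [mem_filter] at hx
    rw [mem_erase]
    exact ⟨by omega, hx.1⟩
  calc rnk S a ≤ (S.erase a).card := card_le_card hsub
    _ = S.card - 1 := card_erase_of_mem ha

lemma rnk_max' {S : Finset ℕ} (hne : S.Nonempty) : rnk S (S.max' hne) = S.card - 1 := by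
  have h : S.filter (· < S.max' hne) = S.erase (S.max' hne) := by
    ext x
    simp only [mem_filter, mem_erase]
    constructor
    · rintro ⟨hxS, hlt⟩; exact ⟨by omega, hxS⟩
    · rintro ⟨hne', hxS⟩
      exact ⟨hxS, lt_of_le_of_ne (le_max' _ x hxS) hne'⟩
  rw [rnk, h, card_erase_of_mem (S.max'_mem hne)]

lemma circDist_comm (n a b : ℕ) : circDist n a b = circDist n b a := by
  unfold circDist
  rw [max_comm, min_comm a b]

def fwdF (s : ℕ) (S : Finset ℕ) : Finset ℕ := S.image (fun a => a - s * rnk S a)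
def bwdF (s : ℕ) (T : Finset ℕ) : Finset ℕ := T.image (fun b => b + s * rnk T b)

section
variable {n s k : ℕ}

lemma fwd_mono {S : Finset ℕ} (hsub : S ⊆ Finset.Icc 1 n) (hsep : IsSepCircle n s S)
    (h1 : (1:ℕ) ∈ S) :
    ∀ a ∈ S, ∀ b ∈ S, a < b → a - s * rnk S a < b - s * rnk S b := by
  intro a ha b hb hab
  have hra := bot_bound hsub hsep h1 a ha
  have hch := rnk_chain (gap_of_sep hsub hsep) b hb a ha hab.le
  have hlt := rnk_lt_rnk ha hab
  have h2 : s * rnk S b = s * rnk S a + s * (rnk S b - rnk S a) := by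
    rw [← Nat.mul_add]; congr 1; omega
  rw [add_one_mul] at hra hch
  omega

lemma fwd_mapsTo {S : Finset ℕ} (hs : 1 ≤ s) (hk : 1 ≤ k) (hn : s * k + 1 ≤ n)
    (hsub : S ⊆ Finset.Icc 1 n) (hcard : S.card = k) (hsep : IsSepCircle n s S)
    (h1 : (1:ℕ) ∈ S) :
    fwdF s S ⊆ Finset.Icc 1 (n - s * k) ∧ (fwdF s S).card = k ∧ 1 ∈ fwdF s S := by
  refine ⟨?_, ?_, ?_⟩
  · intro y hy
    rw [fwdF, mem_image] at hy
    obtain ⟨a, ha, rfl⟩ := hy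
    have hbot := bot_bound hsub hsep h1 a ha
    have htop := top_bound hs hk hn hsub hcard hsep h1 a ha
    have hrk : rnk S a ≤ k - 1 := hcard ▸ rnk_pred_card ha
    have hsplit : s * k = s * rnk S a + s * (k - 1 - rnk S a) + s := by
      have h : rnk S a + (k - 1 - rnk S a) + 1 = k := by omega
      calc s * k = s * (rnk S a + (k - 1 - rnk S a) + 1) := by rw [h]
        _ = _ := by ring
    rw [add_one_mul] at hbot htop
    rw [mem_Icc]
    omega
  · rw [fwdF, card_image_of_injOn, hcard]
    intro x hx y hy hxy
    by_contra hne
    rcases lt_or_gt_of_ne hne with h | h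
    · exact absurd hxy (fwd_mono hsub hsep h1 x hx y hy h).ne
    · exact absurd hxy.symm (fwd_mono hsub hsep h1 y hy x hx h).ne
  · rw [fwdF, mem_image]
    exact ⟨1, h1, by simp [rnk_one hsub]⟩

lemma bwd_fwd {S : Finset ℕ} (hsub : S ⊆ Finset.Icc 1 n) (hsep : IsSepCircle n s S)
    (h1 : (1:ℕ) ∈ S) : bwdF s (fwdF s S) = S := by
  unfold bwdF fwdF
  rw [Finset.image_image]
  have heq : ∀ a ∈ S,
      ((fun b => b + s * rnk (S.image (fun a => a - s * rnk S a)) b) ∘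
        (fun a => a - s * rnk S a)) a = a := by
    intro a ha
    simp only [Function.comp_apply]
    rw [rnk_image (fwd_mono hsub hsep h1) ha]
    have hbot := bot_bound hsub hsep h1 a ha
    rw [add_one_mul] at hbot
    omega
  calc S.image _ = S.image id := Finset.image_congr (fun x hx => heq x hx)
    _ = S := image_id

lemma bwd_mono {T : Finset ℕ} :
    ∀ a ∈ T, ∀ b ∈ T, a < b → a + s * rnk T a < b + s * rnk T b := by
  intro a _ b _ hab
  have := Nat.mul_le_mul_left s (rnk_mono T hab.le)
  omega

lemma bot_bound' {m : ℕ} {T : Finset ℕ} (hsub : T ⊆ Finset.Icc 1 m) :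
    ∀ b ∈ T, 1 + rnk T b ≤ b := by
  intro b hb
  by_cases h1 : (1:ℕ) ∈ T
  · have := rnk_chain (d := 1) (fun a _ b _ h => by omega) b hb 1 h1
      ((mem_Icc.mp (hsub hb)).1)
    rw [rnk_one hsub, one_mul] at this
    omega
  · -- 1 ∉ T : all elements ≥ 2; use min'
    have hne : T.Nonempty := ⟨b, hb⟩
    have hmin : 2 ≤ T.min' hne := by
      have hm := T.min'_mem hne
      have := (mem_Icc.mp (hsub hm)).1
      rcases Nat.lt_or_ge (T.min' hne) 2 with h | h
      · interval_cases h' : T.min' hne <;> simp_all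
      · exact h
    have := rnk_chain (d := 1) (fun a _ b _ h => by omega) b hb (T.min' hne)
      (T.min'_mem hne) (min'_le _ _ hb)
    have hr0 : rnk T (T.min' hne) = 0 := by
      rw [rnk, card_eq_zero, filter_eq_empty_iff]
      intro x hx
      have := min'_le _ _ hx
      omega
    rw [hr0, one_mul] at this
    omega

lemma top_bound' {m : ℕ} {T : Finset ℕ} (hsub : T ⊆ Finset.Icc 1 m)
    (hne : T.Nonempty) :
    ∀ b ∈ T, b + (T.card - 1 - rnk T b) ≤ m := by
  intro b hb
  have hMT := T.max'_mem hne
  have hchain := rnk_chain (d := 1) (fun a _ b _ h => by omega) (T.max' hne) hMT b hb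
    (le_max' _ b hb)
  rw [rnk_max' hne, one_mul] at hchain
  have hMm : T.max' hne ≤ m := (mem_Icc.mp (hsub hMT)).2
  omega

lemma bwd_mapsTo {T : Finset ℕ} (hs : 1 ≤ s) (hk : 1 ≤ k) (hn : s * k + 1 ≤ n)
    (hsub : T ⊆ Finset.Icc 1 (n - s * k)) (hcard : T.card = k) (h1 : (1:ℕ) ∈ T) :
    bwdF s T ⊆ Finset.Icc 1 n ∧ (bwdF s T).card = k ∧ IsSepCircle n s (bwdF s T) ∧
      1 ∈ bwdF s T := by
  have hne : T.Nonempty := ⟨1, h1⟩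
  refine ⟨?_, ?_, ?_, ?_⟩
  · intro y hy
    rw [bwdF, mem_image] at hy
    obtain ⟨b, hb, rfl⟩ := hy
    have hb1 : 1 ≤ b := (mem_Icc.mp (hsub hb)).1
    have hbm : b ≤ n - s * k := (mem_Icc.mp (hsub hb)).2
    have hrk : rnk T b ≤ k := hcard ▸ rnk_le_card T b
    have : s * rnk T b ≤ s * k := Nat.mul_le_mul_left s hrk
    rw [mem_Icc]
    omega
  · rw [bwdF, card_image_of_injOn, hcard]
    intro x hx y hy hxy
    by_contra hne'
    rcases lt_or_gt_of_ne hne' with h | h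
    · exact absurd hxy (bwd_mono x hx y hy h).ne
    · exact absurd hxy.symm (bwd_mono y hy x hx h).ne
  · -- separation
    have key : ∀ a ∈ T, ∀ b ∈ T, a < b →
        s + 1 ≤ circDist n (a + s * rnk T a) (b + s * rnk T b) := by
      intro a ha b hb hab
      have hchain := rnk_chain (d := 1) (fun a _ b _ h => by omega) b hb a ha hab.le
      rw [one_mul] at hchain
      have hlt := rnk_lt_rnk ha hab
      have hmul : s * rnk T a + s ≤ s * rnk T b := by
        have := Nat.mul_le_mul_left s (by omega : rnk T a + 1 ≤ rnk T b)
        rw [Nat.mul_add, Nat.mul_one] at this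
        omega
      -- upper bound on ψ b
      have htopb := top_bound' hsub hne b hb
      rw [hcard] at htopb
      have hrkb : rnk T b ≤ k - 1 := hcard ▸ rnk_pred_card hb
      have hsplit : s * k = s * rnk T b + s * (k - 1 - rnk T b) + s := by
        have h : rnk T b + (k - 1 - rnk T b) + 1 = k := by omega
        calc s * k = s * (rnk T b + (k - 1 - rnk T b) + 1) := by rw [h]
          _ = _ := by ring
      have ha1 : 1 ≤ a := (mem_Icc.mp (hsub ha)).1
      have hmono := bwd_mono (s := s) a ha b hb hab
      unfold circDist
      rw [max_eq_right hmono.le, min_eq_left hmono.le]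
      omega
    intro x hx y hy hxy
    rw [bwdF, mem_image] at hx hy
    obtain ⟨a, ha, rfl⟩ := hx
    obtain ⟨b, hb, rfl⟩ := hy
    rcases lt_trichotomy a b with h | rfl | h
    · exact key a ha b hb h
    · omega
    · rw [circDist_comm]
      exact key b hb a ha h
  · rw [bwdF, mem_image]
    exact ⟨1, h1, by simp [rnk_one hsub]⟩

lemma fwd_bwd {m : ℕ} {T : Finset ℕ} (hsub : T ⊆ Finset.Icc 1 m) :
    fwdF s (bwdF s T) = T := by
  unfold bwdF fwdF
  rw [Finset.image_image]
  have heq : ∀ b ∈ T,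
      ((fun a => a - s * rnk (T.image (fun b => b + s * rnk T b)) a) ∘
        (fun b => b + s * rnk T b)) b = b := by
    intro b hb
    simp only [Function.comp_apply]
    rw [rnk_image (fun x hx y hy h => bwd_mono x hx y hy h) hb]
    omega
  calc T.image _ = T.image id := Finset.image_congr (fun x hx => heq x hx)
    _ = T := image_id

end

/-- Talbot: for `n ≥ sk+1`, the number of `s`-separated `k`-subsets of a circle of
`n` elements containing the fixed element `1` is `C(n - sk - 1, k - 1)`. -/
theorem stmt_3 (n s k : ℕ) (hs : 1 ≤ s) (hk : 1 ≤ k) (hn : s * k + 1 ≤ n) :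
    {S : Finset ℕ | S ⊆ Finset.Icc 1 n ∧ S.card = k ∧ IsSepCircle n s S ∧ 1 ∈ S}.ncard =
      (n - s * k - 1).choose (k - 1) := by
  classical
  set m := n - s * k with hm
  have hm1 : 1 ≤ m := by omega
  set A : Set (Finset ℕ) :=
    {S : Finset ℕ | S ⊆ Finset.Icc 1 n ∧ S.card = k ∧ IsSepCircle n s S ∧ 1 ∈ S} with hA
  set B : Set (Finset ℕ) := {T : Finset ℕ | T ⊆ Finset.Icc 1 m ∧ T.card = k ∧ 1 ∈ T} with hB
  have hBij : Set.BijOn (fwdF s) A B := by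
    refine ⟨?_, ?_, ?_⟩
    · rintro S ⟨h1, h2, h3, h4⟩
      exact fwd_mapsTo hs hk hn h1 h2 h3 h4
    · rintro S1 ⟨h1, h2, h3, h4⟩ S2 ⟨g1, g2, g3, g4⟩ heq
      rw [← bwd_fwd h1 h3 h4, ← bwd_fwd g1 g3 g4, heq]
    · rintro T ⟨h1, h2, h3⟩
      exact ⟨bwdF s T, bwd_mapsTo hs hk hn h1 h2 h3, fwd_bwd h1⟩
  have hAB : A.ncard = B.ncard := by
    rw [← hBij.image_eq, Set.ncard_image_of_injOn hBij.injOn]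
  set D : Finset (Finset ℕ) := (Finset.Icc 2 m).powersetCard (k - 1) with hD
  have hDmem : ∀ T' : Finset ℕ, T' ∈ D ↔ T' ⊆ Finset.Icc 2 m ∧ T'.card = k - 1 :=
    fun T' => mem_powersetCard
  have hnot1 : ∀ T' : Finset ℕ, T' ⊆ Finset.Icc 2 m → (1:ℕ) ∉ T' := by
    intro T' hsub h
    have := mem_Icc.mp (hsub h)
    omega
  have hins : Set.BijOn (insert 1) ↑D B := by
    refine ⟨?_, ?_, ?_⟩
    · intro T' hT'
      rw [Finset.mem_coe, hDmem] at hT'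
      obtain ⟨hsub', hcard'⟩ := hT'
      refine ⟨?_, ?_, mem_insert_self 1 T'⟩
      · intro x hx
        rcases mem_insert.mp hx with rfl | hx'
        · exact mem_Icc.mpr ⟨le_refl 1, hm1⟩
        · have := mem_Icc.mp (hsub' hx')
          exact mem_Icc.mpr ⟨by omega, this.2⟩
      · rw [card_insert_of_notMem (hnot1 T' hsub'), hcard']
        omega
    · intro T1 hT1 T2 hT2 heq
      rw [Finset.mem_coe, hDmem] at hT1 hT2
      rw [← Finset.erase_insert (hnot1 T1 hT1.1), ← Finset.erase_insert (hnot1 T2 hT2.1),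
        heq]
    · rintro T ⟨h1, h2, h3⟩
      refine ⟨T.erase 1, ?_, Finset.insert_erase h3⟩
      rw [Finset.mem_coe, hDmem]
      constructor
      · intro x hx
        rw [mem_erase] at hx
        have := mem_Icc.mp (h1 hx.2)
        exact mem_Icc.mpr ⟨by omega, this.2⟩
      · rw [card_erase_of_mem h3, h2]
  have hDB : B.ncard = D.card := by
    rw [← hins.image_eq, Set.ncard_image_of_injOn hins.injOn, Set.ncard_coe_finset]
  rw [hAB, hDB, hD, Finset.card_powersetCard, Nat.card_Icc]
  congr 1
end

section
/- Let n ≥ sk+1. The number of s-separated k-subsets of a circle with n elements is (n/(n-sk)) * C(n-sk, k). -/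
open Finset

instance (n s : ℕ) (S : Finset ℕ) : Decidable (IsSepCircle n s S) := by
  unfold IsSepCircle; infer_instance

lemma circDist_of_le {n a b : ℕ} (h : a ≤ b) :
    circDist n a b = min (b - a) (n - (b - a)) := by
  rw [circDist, max_eq_right h, min_eq_left h]

/-- from separation, ordered pair facts -/
lemma sep_pair {n s : ℕ} {S : Finset ℕ} (hsep : IsSepCircle n s S)
    {a b : ℕ} (ha : a ∈ S) (hb : b ∈ S) (hab : a < b) :
    s + 1 ≤ b - a ∧ s + 1 ≤ n - (b - a) := by
  have := hsep a ha b hb (by omega)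
  rw [circDist_of_le (le_of_lt hab)] at this
  exact ⟨le_trans this (min_le_left _ _), le_trans this (min_le_right _ _)⟩

lemma sep_of {n s : ℕ} {S : Finset ℕ}
    (h : ∀ a ∈ S, ∀ b ∈ S, a < b → s + 1 ≤ b - a ∧ b - a + s + 1 ≤ n) :
    IsSepCircle n s S := by
  intro a ha b hb hab
  rcases lt_trichotomy a b with hlt | heq | hgt
  · have := h a ha b hb hlt
    rw [circDist_of_le (le_of_lt hlt)]
    simp only [le_min_iff]
    omega
  · omega
  · have := h b hb a ha hgt
    rw [circDist, max_eq_left (le_of_lt hgt), min_eq_right (le_of_lt hgt)]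
    simp only [le_min_iff]
    omega

def LinSep (s : ℕ) (S : Finset ℕ) : Prop := ∀ a ∈ S, ∀ b ∈ S, a < b → s + 1 ≤ b - a

instance (s : ℕ) (S : Finset ℕ) : Decidable (LinSep s S) := by
  unfold LinSep; infer_instance

def linF (s L k : ℕ) : Finset (Finset ℕ) :=
  ((Finset.Icc 1 L).powerset).filter (fun S => S.card = k ∧ LinSep s S)

lemma mem_linF {s L k : ℕ} {S : Finset ℕ} :
    S ∈ linF s L k ↔ S ⊆ Finset.Icc 1 L ∧ S.card = k ∧ LinSep s S := by
  simp [linF, and_assoc]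

lemma linF_card (s : ℕ) : ∀ L k, (linF s L k).card = (L - s * (k - 1)).choose k := by
  intro L
  induction L using Nat.strong_induction_on with
  | _ L IH =>
  intro k
  match k with
  | 0 =>
    have : linF s L 0 = {∅} := by
      ext S
      rw [mem_linF, mem_singleton, Finset.card_eq_zero]
      constructor
      · rintro ⟨-, h, -⟩; exact h
      · rintro rfl; exact ⟨empty_subset _, rfl, by intro a ha; simp at ha⟩
    simp [this]
  | (k + 1) =>
  match L with
  | 0 =>
    have : linF s 0 (k+1) = ∅ := by
      ext S
      rw [mem_linF]
      simp only [notMem_empty, iff_false]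
      rintro ⟨hsub, hcard, -⟩
      have : S = ∅ := by
        rw [← subset_empty]; simpa using hsub
      simp [this] at hcard
    simp [this]
  | (L + 1) =>
    have hsplit := card_filter_add_card_filter_not
      (s := linF s (L+1) (k+1)) (p := fun S => (L+1) ∈ S)
    have h1 : (linF s (L+1) (k+1)).filter (fun S => (L+1) ∉ S) = linF s L (k+1) := by
      ext S
      rw [mem_filter, mem_linF, mem_linF]
      constructor
      · rintro ⟨⟨hsub, hrest⟩, hnot⟩
        refine ⟨fun x hx => ?_, hrest⟩
        have h := hsub hx
        have : x ≠ L + 1 := by rintro rfl; exact hnot hx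
        simp only [mem_Icc] at h ⊢
        omega
      · rintro ⟨hsub, hrest⟩
        have hs' : S ⊆ Finset.Icc 1 (L+1) := by
          intro x hx; have := hsub hx; simp only [mem_Icc] at this ⊢; omega
        refine ⟨⟨hs', hrest⟩, fun hmem => ?_⟩
        have := hsub hmem; simp only [mem_Icc] at this; omega
    have h2 : ((linF s (L+1) (k+1)).filter (fun S => (L+1) ∈ S)).card
        = (linF s (L + 1 - (s+1)) k).card := by
      refine card_bij' (fun S _ => S.erase (L+1)) (fun S _ => insert (L+1) S) ?hi ?hj ?left ?right
      case hi =>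
        intro S hS
        rw [mem_filter, mem_linF] at hS
        obtain ⟨⟨hsub, hcard, hsep⟩, hmem⟩ := hS
        rw [mem_linF]
        refine ⟨?_, ?_, ?_⟩
        · intro x hx
          rw [mem_erase] at hx
          obtain ⟨hne, hxS⟩ := hx
          have hx1 := hsub hxS
          simp only [mem_Icc] at hx1 ⊢
          have hlt : x < L + 1 := by omega
          have := hsep x hxS (L+1) hmem hlt
          omega
        · rw [card_erase_of_mem hmem, hcard]; rfl
        · intro a ha b hb hab
          rw [mem_erase] at ha hb
          exact hsep a ha.2 b hb.2 hab
      case hj =>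
        intro S hS
        rw [mem_linF] at hS
        obtain ⟨hsub, hcard, hsep⟩ := hS
        have hnot : (L+1) ∉ S := by
          intro h
          have := hsub h; simp only [mem_Icc] at this; omega
        have hbound : ∀ x ∈ S, x + (s + 1) ≤ L + 1 := by
          intro x hx; have := hsub hx; simp only [mem_Icc] at this; omega
        rw [mem_filter, mem_linF]
        refine ⟨⟨?_, ?_, ?_⟩, mem_insert_self _ _⟩
        · intro x hx
          rw [mem_insert] at hx
          rcases hx with rfl | hx
          · simp only [mem_Icc]; omega
          · have := hsub hx; simp only [mem_Icc] at this ⊢; omega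
        · rw [card_insert_of_notMem hnot, hcard]
        · intro a ha b hb hab
          rw [mem_insert] at ha hb
          rcases ha with rfl | ha
          · rcases hb with rfl | hb
            · omega
            · have := hbound b hb; omega
          · rcases hb with rfl | hb
            · have := hbound a ha; omega
            · exact hsep a ha b hb hab
      case left =>
        intro S hS
        rw [mem_filter] at hS
        exact insert_erase hS.2
      case right =>
        intro S hS
        rw [mem_linF] at hS
        apply erase_insert
        intro h
        have := hS.1 h; simp only [mem_Icc] at this; omega
    rw [h1] at hsplit
    have e2 : L + 1 - (s + 1) = L - s := by omega
    rw [e2] at h2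
    rw [← hsplit, h2, IH L (by omega) (k+1), IH (L - s) (by omega) k]
    rcases k with _ | k'
    · simp [Nat.choose_one_right]
      omega
    · have e3 : L - s * (k' + 1 + 1 - 1) = (L + 1 - s * (k' + 1 + 1 - 1)) - 1 := by
        rcases Nat.lt_or_ge L (s * (k'+1)) with h | h <;> simp <;> omega
      have e4 : L - s - s * (k' + 1 - 1) = (L + 1 - s * (k' + 1 + 1 - 1)) - 1 := by
        rcases Nat.lt_or_ge L (s * (k'+1)) with h | h <;> simp [Nat.mul_succ] <;> omega
      rw [e3, e4]
      generalize L + 1 - s * (k' + 1 + 1 - 1) = X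
      rcases X with _ | Y
      · simp
      · simp only [Nat.add_sub_cancel, Nat.choose_succ_succ]
def circF (n s k : ℕ) : Finset (Finset ℕ) :=
  ((Finset.Icc 1 n).powerset).filter (fun S => S.card = k ∧ IsSepCircle n s S)

lemma mem_circF {n s k : ℕ} {S : Finset ℕ} :
    S ∈ circF n s k ↔ S ⊆ Finset.Icc 1 n ∧ S.card = k ∧ IsSepCircle n s S := by
  simp [circF, and_assoc]

/-- count of circle-separated sets all of whose elements are ≥ s+1 -/
lemma high_card (n s k : ℕ) (hs : 1 ≤ s) (hk : 1 ≤ k) (hn : s * k + 1 ≤ n) :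
    ((circF n s k).filter (fun S => ∀ x ∈ S, s + 1 ≤ x)).card = (n - s * k).choose k := by
  have key : ((circF n s k).filter (fun S => ∀ x ∈ S, s + 1 ≤ x)).card
      = (linF s (n - s) k).card := by
    refine card_bij' (fun S _ => S.image (· - s)) (fun S _ => S.map ⟨(· + s), add_left_injective s⟩)
      ?hi ?hj ?left ?right
    case hi =>
      intro S hS
      rw [mem_filter, mem_circF] at hS
      obtain ⟨⟨hsub, hcard, hsep⟩, hhigh⟩ := hS
      have hbig : ∀ x ∈ S, s + 1 ≤ x ∧ x ≤ n := by
        intro x hx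
        have := hsub hx
        simp only [mem_Icc] at this
        exact ⟨hhigh x hx, this.2⟩
      rw [mem_linF]
      refine ⟨?_, ?_, ?_⟩
      · intro x hx
        rw [mem_image] at hx
        obtain ⟨b, hb, rfl⟩ := hx
        have := hbig b hb
        simp only [mem_Icc]
        omega
      · rw [card_image_of_injOn, hcard]
        intro a ha b hb hab
        have h1 := hbig a ha
        have h2 := hbig b hb
        simp only at hab
        omega
      · intro x hx y hy hxy
        rw [mem_image] at hx hy
        obtain ⟨a, ha, rfl⟩ := hx
        obtain ⟨b, hb, rfl⟩ := hy
        have h1 := hbig a ha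
        have h2 := hbig b hb
        have hab : a < b := by omega
        have := (sep_pair hsep ha hb hab).1
        omega
    case hj =>
      intro S hS
      rw [mem_linF] at hS
      obtain ⟨hsub, hcard, hsep⟩ := hS
      have hmem : ∀ x ∈ S, 1 ≤ x ∧ x ≤ n - s := by
        intro x hx; have := hsub hx; simpa using this
      rw [mem_filter, mem_circF]
      refine ⟨⟨?_, ?_, ?_⟩, ?_⟩
      · intro x hx
        rw [mem_map] at hx
        obtain ⟨b, hb, rfl⟩ := hx
        have := hmem b hb
        simp only [Function.Embedding.coeFn_mk, mem_Icc]
        omega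
      · rw [card_map, hcard]
      · apply sep_of
        intro x hx y hy hxy
        rw [mem_map] at hx hy
        obtain ⟨a, ha, rfl⟩ := hx
        obtain ⟨b, hb, rfl⟩ := hy
        simp only [Function.Embedding.coeFn_mk] at hxy ⊢
        have hab : a < b := by omega
        have := hsep a ha b hb hab
        have h1 := hmem a ha
        have h2 := hmem b hb
        omega
      · intro x hx
        rw [mem_map] at hx
        obtain ⟨b, hb, rfl⟩ := hx
        have := hmem b hb
        simp only [Function.Embedding.coeFn_mk]
        omega
    case left =>
      intro S hS
      rw [mem_filter] at hS
      simp only [map_eq_image, image_image]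
      refine Eq.trans (image_congr ?_) image_id
      intro x hx
      have := hS.2 x (by exact_mod_cast hx)
      simp only [Function.comp_apply, Function.Embedding.coeFn_mk, id_eq]
      omega
    case right =>
      intro S hS
      simp only [map_eq_image, image_image]
      refine Eq.trans (image_congr ?_) image_id
      intro x hx
      simp only [Function.comp_apply, Function.Embedding.coeFn_mk, id_eq]
      omega
  rw [key, linF_card]
  congr 1
  obtain ⟨k', rfl⟩ : ∃ k', k = k' + 1 := ⟨k - 1, by omega⟩
  simp only [Nat.add_sub_cancel]
  have : s + s * k' = s * (k' + 1) := by ring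
  omega
lemma low_bound {n s k a : ℕ} {S : Finset ℕ} (hS : S ∈ circF n s k)
    (haS : a ∈ S) (ha1 : 1 ≤ a) (has : a ≤ s) :
    ∀ b ∈ S, b ≠ a → a + s + 1 ≤ b ∧ b + s + 1 ≤ n + a := by
  rw [mem_circF] at hS
  obtain ⟨hsub, hcard, hsep⟩ := hS
  intro b hb hba
  have hbI : 1 ≤ b ∧ b ≤ n := by have := hsub hb; simpa using this
  rcases lt_trichotomy b a with hlt | heq | hgt
  · have := sep_pair hsep hb haS hlt
    omega
  · omega
  · have := sep_pair hsep haS hb hgt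
    omega

lemma low_card (n s k a : ℕ) (hs : 1 ≤ s) (hk : 1 ≤ k) (hn : s * k + 1 ≤ n)
    (ha1 : 1 ≤ a) (has : a ≤ s) :
    ((circF n s k).filter (fun S => a ∈ S)).card = (n - s * k - 1).choose (k - 1) := by
  have key : ((circF n s k).filter (fun S => a ∈ S)).card
      = (linF s (n - 2 * s - 1) (k - 1)).card := by
    refine card_bij' (fun S _ => (S.erase a).image (· - (a + s)))
      (fun S _ => insert a (S.map ⟨(· + (a + s)), add_left_injective (a + s)⟩))
      ?hi ?hj ?left ?right
    case hi =>
      intro S hS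
      rw [mem_filter] at hS
      obtain ⟨hSF, haS⟩ := hS
      have hb := low_bound hSF haS ha1 has
      rw [mem_circF] at hSF
      obtain ⟨hsub, hcard, hsep⟩ := hSF
      have hbig : ∀ x ∈ S.erase a, a + s + 1 ≤ x ∧ x + s + 1 ≤ n + a := by
        intro x hx
        rw [mem_erase] at hx
        exact hb x hx.2 hx.1
      rw [mem_linF]
      refine ⟨?_, ?_, ?_⟩
      · intro x hx
        rw [mem_image] at hx
        obtain ⟨b, hbm, rfl⟩ := hx
        have := hbig b hbm
        simp only [mem_Icc]
        omega
      · rw [card_image_of_injOn, card_erase_of_mem haS, hcard]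
        intro x hx y hy hxy
        have h1 := hbig x hx
        have h2 := hbig y hy
        simp only at hxy
        omega
      · intro x hx y hy hxy
        rw [mem_image] at hx hy
        obtain ⟨b, hbm, rfl⟩ := hx
        obtain ⟨c, hcm, rfl⟩ := hy
        have h1 := hbig b hbm
        have h2 := hbig c hcm
        have hbc : b < c := by omega
        have := sep_pair hsep (mem_of_mem_erase hbm) (mem_of_mem_erase hcm) hbc
        omega
    case hj =>
      intro S hS
      rw [mem_linF] at hS
      obtain ⟨hsub, hcard, hsep⟩ := hS
      have hmem : ∀ x ∈ S, 1 ≤ x ∧ x ≤ n - 2 * s - 1 := by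
        intro x hx; have := hsub hx; simpa using this
      have hnotmem : a ∉ S.map ⟨(· + (a + s)), add_left_injective (a + s)⟩ := by
        rw [mem_map]
        rintro ⟨x, hx, hxa⟩
        simp only [Function.Embedding.coeFn_mk] at hxa
        have := hmem x hx
        omega
      rw [mem_filter, mem_circF]
      refine ⟨⟨?_, ?_, ?_⟩, mem_insert_self _ _⟩
      · intro x hx
        rw [mem_insert] at hx
        have hsk : s ≤ s * k := Nat.le_mul_of_pos_right s hk
        rcases hx with rfl | hx
        · simp only [mem_Icc]; omega
        · rw [mem_map] at hx
          obtain ⟨b, hbm, rfl⟩ := hx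
          have := hmem b hbm
          simp only [Function.Embedding.coeFn_mk, mem_Icc]
          omega
      · rw [card_insert_of_notMem hnotmem, card_map, hcard]
        omega
      · apply sep_of
        intro x hx y hy hxy
        rw [mem_insert] at hx hy
        rcases hx with rfl | hx
        · rcases hy with rfl | hy
          · omega
          · rw [mem_map] at hy
            obtain ⟨c, hcm, rfl⟩ := hy
            have := hmem c hcm
            simp only [Function.Embedding.coeFn_mk]
            omega
        · rcases hy with rfl | hy
          · rw [mem_map] at hx
            obtain ⟨b, hbm, rfl⟩ := hx
            have := hmem b hbm
            simp only [Function.Embedding.coeFn_mk] at hxy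
            omega
          · rw [mem_map] at hx hy
            obtain ⟨b, hbm, rfl⟩ := hx
            obtain ⟨c, hcm, rfl⟩ := hy
            simp only [Function.Embedding.coeFn_mk] at hxy ⊢
            have hbc : b < c := by omega
            have := hsep b hbm c hcm hbc
            have h1 := hmem b hbm
            have h2 := hmem c hcm
            omega
    case left =>
      intro S hS
      rw [mem_filter] at hS
      obtain ⟨hSF, haS⟩ := hS
      have hb := low_bound hSF haS ha1 has
      simp only [map_eq_image, image_image]
      have him : (S.erase a).image (⇑(⟨(· + (a + s)), add_left_injective (a + s)⟩ : ℕ ↪ ℕ) ∘ (· - (a + s))) = S.erase a := by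
        refine Eq.trans (image_congr ?_) image_id
        intro x hx
        rw [mem_coe, mem_erase] at hx
        have := hb x hx.2 hx.1
        simp only [Function.comp_apply, Function.Embedding.coeFn_mk, id_eq]
        omega
      rw [him, insert_erase haS]
    case right =>
      intro S hS
      have hnotmem : a ∉ S.map ⟨(· + (a + s)), add_left_injective (a + s)⟩ := by
        rw [mem_map]
        rintro ⟨x, hx, hxa⟩
        rw [mem_linF] at hS
        have := hS.1 hx
        simp only [Function.Embedding.coeFn_mk] at hxa
        simp only [mem_Icc] at this
        omega
      beta_reduce
      rw [erase_insert hnotmem]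
      simp only [map_eq_image, image_image]
      refine Eq.trans (image_congr ?_) image_id
      intro x hx
      simp only [Function.comp_apply, Function.Embedding.coeFn_mk, id_eq]
      omega
  rw [key, linF_card]
  rcases Nat.lt_or_ge k 2 with hk2 | hk2
  · interval_cases k
    simp
  · obtain ⟨k', rfl⟩ : ∃ k', k = k' + 2 := ⟨k - 2, by omega⟩
    congr 1
    simp only [show k' + 2 - 1 = k' + 1 by omega, show k' + 1 - 1 = k' by omega]
    have h1 : s * (k' + 2) = 2 * s + s * k' := by ring
    omega
lemma circF_card (n s k : ℕ) (hs : 1 ≤ s) (hk : 1 ≤ k) (hn : s * k + 1 ≤ n) :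
    (circF n s k).card = (n - s * k).choose k + s * ((n - s * k - 1).choose (k - 1)) := by
  have hsplit := card_filter_add_card_filter_not
    (s := circF n s k) (p := fun S => ∀ x ∈ S, s + 1 ≤ x)
  have hlow : (circF n s k).filter (fun S => ¬ ∀ x ∈ S, s + 1 ≤ x)
      = (Finset.Icc 1 s).biUnion (fun a => (circF n s k).filter (fun S => a ∈ S)) := by
    ext S
    simp only [mem_filter, mem_biUnion, mem_Icc]
    constructor
    · rintro ⟨hSF, hnot⟩
      push_neg at hnot
      obtain ⟨x, hxS, hx⟩ := hnot
      have hx1 : 1 ≤ x := by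
        have := (mem_circF.mp hSF).1 hxS
        simp only [mem_Icc] at this
        omega
      exact ⟨x, ⟨hx1, by omega⟩, hSF, hxS⟩
    · rintro ⟨x, ⟨hx1, hxs⟩, hSF, hxS⟩
      refine ⟨hSF, ?_⟩
      push_neg
      exact ⟨x, hxS, by omega⟩
  have hdisj : ∀ a ∈ Finset.Icc 1 s, ∀ b ∈ Finset.Icc 1 s, a ≠ b →
      Disjoint ((circF n s k).filter (fun S => a ∈ S))
        ((circF n s k).filter (fun S => b ∈ S)) := by
    intro a ha b hb hab
    rw [disjoint_left]
    intro S hSa hSb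
    rw [mem_filter] at hSa hSb
    simp only [mem_Icc] at ha hb
    have hsep := (mem_circF.mp hSa.1).2.2
    rcases lt_trichotomy a b with h | h | h
    · have := sep_pair hsep hSa.2 hSb.2 h; omega
    · omega
    · have := sep_pair hsep hSb.2 hSa.2 h; omega
  rw [hlow, card_biUnion hdisj] at hsplit
  have hsum : ∑ a ∈ Finset.Icc 1 s, ((circF n s k).filter (fun S => a ∈ S)).card
      = s * ((n - s * k - 1).choose (k - 1)) := by
    rw [Finset.sum_congr rfl (fun a ha => by
      simp only [mem_Icc] at ha
      exact low_card n s k a hs hk hn ha.1 ha.2)]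
    simp [Nat.card_Icc, mul_comm]
  rw [high_card n s k hs hk hn, hsum] at hsplit
  omega

/-- Mansour–Sun: for `n ≥ sk+1`, the number of `s`-separated `k`-subsets of a circle
of `n` elements is `(n/(n-sk)) * C(n-sk, k)`. -/
theorem stmt_4 (n s k : ℕ) (hs : 1 ≤ s) (hk : 1 ≤ k) (hn : s * k + 1 ≤ n) :
    (({S : Finset ℕ | S ⊆ Finset.Icc 1 n ∧ S.card = k ∧ IsSepCircle n s S}.ncard : ℚ)) =
      (n : ℚ) / ((n : ℚ) - (s : ℚ) * (k : ℚ)) * ((n - s * k).choose k : ℚ) := by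
  have hset : {S : Finset ℕ | S ⊆ Finset.Icc 1 n ∧ S.card = k ∧ IsSepCircle n s S}
      = ↑(circF n s k) := by
    ext S
    simp [mem_circF, Set.mem_setOf_eq]
  rw [hset, Set.ncard_coe_finset, circF_card n s k hs hk hn]
  have hm1 : 1 ≤ n - s * k := by omega
  have hmn : (n - s * k) + s * k = n := by omega
  have hid : (n - s * k) * Nat.choose (n - s * k - 1) (k - 1)
      = Nat.choose (n - s * k) k * k := by
    obtain ⟨m', hm'⟩ : ∃ m', n - s * k = m' + 1 := ⟨n - s * k - 1, by omega⟩
    obtain ⟨k', rfl⟩ : ∃ k', k = k' + 1 := ⟨k - 1, by omega⟩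
    rw [hm']
    simpa using Nat.add_one_mul_choose_eq m' k'
  have hcast : ((n : ℚ) - (s : ℚ) * (k : ℚ)) = ((n - s * k : ℕ) : ℚ) := by
    rw [Nat.cast_sub (show s * k ≤ n by omega), Nat.cast_mul]
  have hne : ((n - s * k : ℕ) : ℚ) ≠ 0 := by
    exact_mod_cast (show ((n - s * k : ℕ) : ℚ) ≠ 0 from Nat.cast_ne_zero.mpr (by omega))
  rw [hcast, div_mul_eq_mul_div, eq_div_iff hne]
  have hnat : (Nat.choose (n - s * k) k + s * Nat.choose (n - s * k - 1) (k - 1)) * (n - s * k)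
      = n * Nat.choose (n - s * k) k := by
    calc (Nat.choose (n - s * k) k + s * Nat.choose (n - s * k - 1) (k - 1)) * (n - s * k)
        = (n - s * k) * Nat.choose (n - s * k) k
          + s * ((n - s * k) * Nat.choose (n - s * k - 1) (k - 1)) := by ring
      _ = (n - s * k) * Nat.choose (n - s * k) k + s * (Nat.choose (n - s * k) k * k) := by
          rw [hid]
      _ = ((n - s * k) + s * k) * Nat.choose (n - s * k) k := by ring
      _ = n * Nat.choose (n - s * k) k := by rw [hmn]
  exact_mod_cast hnat
end
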